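/- Let M_φ be the family of finite MDPs sharing (S,A,p,γ) with rewards of the form r_w(s,a) = φ(s,a)ᵀw for a fixed feature map φ : S×A → ℝ^d. Fix w₁,...,wₙ and a target wᵢ ∈ ℝ^d. Let π*_j be an optimal policy for task w_j and Q_i^{π*_j} its value function in task wᵢ, and suppose approximations Q̃_j satisfy |Q_i^{π*_j}(s,a) − Q̃_j(s,a)| ≤ ε for all s,a,j. Define π(s) ∈ argmax_a max_j Q̃_j(s,a) and φ_max = max_{s,a} ‖φ(s,a)‖₂. Then for all (s,a): Q*_i(s,a) − Q_i^{π}(s,a) ≤ (2/(1−γ)) (φ_max · min_j ‖wᵢ − w_j‖₂ + ε), where Q*_i is the optimal value function of task wᵢ. -/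

import Mathlib

open Finset

private lemma sup_bound_aux {S A : Type*} [Fintype S] [Fintype A] [Nonempty S] [Nonempty A]
    (p : S → A → S → ℝ) (hp0 : ∀ s a s', 0 ≤ p s a s') (hp1 : ∀ s a, ∑ s', p s a s' = 1)
    (γ c : ℝ) (hγ0 : 0 ≤ γ) (hγ1 : γ < 1)
    (D : S → A → ℝ) (E : S → ℝ)
    (hDE : ∀ s a, D s a ≤ c + γ * ∑ s', p s a s' * E s')
    (hE : ∀ s', ∃ b, E s' ≤ D s' b) :
    ∀ s a, D s a ≤ c / (1 - γ) := by
  obtain ⟨⟨s0, a0⟩, hmax⟩ := Finite.exists_max (fun sa : S × A => D sa.1 sa.2)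
  set M := D s0 a0 with hM
  have hDM : ∀ s a, D s a ≤ M := fun s a => hmax (s, a)
  have hEM : ∀ s', E s' ≤ M := by
    intro s'
    obtain ⟨b, hb⟩ := hE s'
    exact hb.trans (hDM s' b)
  have hMle : M ≤ c + γ * M := by
    calc M ≤ c + γ * ∑ s', p s0 a0 s' * E s' := hDE s0 a0
    _ ≤ c + γ * ∑ s', p s0 a0 s' * M := by
        refine add_le_add_right (mul_le_mul_of_nonneg_left ?_ hγ0) c
        exact Finset.sum_le_sum fun s' _ =>
          mul_le_mul_of_nonneg_left (hEM s') (hp0 s0 a0 s')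
    _ = c + γ * M := by rw [← Finset.sum_mul, hp1, one_mul]
  have h1γ : 0 < 1 - γ := by linarith
  have hMc : M ≤ c / (1 - γ) := by
    rw [le_div_iff₀ h1γ]; nlinarith
  exact fun s a => (hDM s a).trans hMc

/-- Theorem 2 of the paper: GPI over SF-based value functions of optimal
policies of tasks w₁,...,wₙ, evaluated on task wᵢ. -/
theorem gpi_successor_features
    {S A : Type*} [Fintype S] [Fintype A] [Nonempty S] [Nonempty A]
    {d : ℕ}
    (p : S → A → S → ℝ)
    (hp0 : ∀ s a s', 0 ≤ p s a s') (hp1 : ∀ s a, ∑ s', p s a s' = 1)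
    (γ : ℝ) (hγ0 : 0 ≤ γ) (hγ1 : γ < 1)
    (φ : S → A → EuclideanSpace ℝ (Fin d))
    (φmax : ℝ) (hφmax : ∀ s a, ‖φ s a‖ ≤ φmax)
    (n : ℕ) (hn : 0 < n)
    (w : Fin n → EuclideanSpace ℝ (Fin d)) (wi : EuclideanSpace ℝ (Fin d))
    -- π*_j : optimal policy of task w_j
    (πj : Fin n → S → A)
    (Qstarj : Fin n → S → A → ℝ)
    (hQstarj : ∀ j s a, Qstarj j s a =
      (inner ℝ (φ s a) (w j) : ℝ) + γ * ∑ s', p s a s' * ⨆ b, Qstarj j s' b)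
    (hπjopt : ∀ j s a, Qstarj j s a =
      (inner ℝ (φ s a) (w j) : ℝ) + γ * ∑ s', p s a s' * Qstarj j s' (πj j s'))
    -- Q_i^{π*_j} : value of π*_j in task wᵢ
    (Qi : Fin n → S → A → ℝ)
    (hQi : ∀ j s a, Qi j s a =
      (inner ℝ (φ s a) wi : ℝ) + γ * ∑ s', p s a s' * Qi j s' (πj j s'))
    -- approximations
    (Qt : Fin n → S → A → ℝ) (ε : ℝ)
    (hε : ∀ j s a, |Qi j s a - Qt j s a| ≤ ε)
    -- GPI policy
    (π : S → A)
    (hπ : ∀ s a, (⨆ j, Qt j s a) ≤ ⨆ j, Qt j s (π s))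
    (Qπ : S → A → ℝ)
    (hQπ : ∀ s a, Qπ s a =
      (inner ℝ (φ s a) wi : ℝ) + γ * ∑ s', p s a s' * Qπ s' (π s'))
    -- Q*_i : optimal value of task wᵢ
    (Qstari : S → A → ℝ)
    (hQstari : ∀ s a, Qstari s a =
      (inner ℝ (φ s a) wi : ℝ) + γ * ∑ s', p s a s' * ⨆ b, Qstari s' b) :
    ∀ s a, Qstari s a - Qπ s a ≤
      2 / (1 - γ) * (φmax * (⨅ j, ‖wi - w j‖) + ε) := by
  haveI : Nonempty (Fin n) := Fin.pos_iff_nonempty.mp hn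
  have h1γ : 0 < 1 - γ := by linarith
  obtain ⟨s1⟩ := ‹Nonempty S›
  obtain ⟨a1⟩ := ‹Nonempty A›
  have hφ0 : 0 ≤ φmax := (norm_nonneg _).trans (hφmax s1 a1)
  have hε0 : 0 ≤ ε := (abs_nonneg _).trans (hε (Classical.arbitrary _) s1 a1)
  have bddA : ∀ (f : Fin n → ℝ), BddAbove (Set.range f) :=
    fun f => Set.Finite.bddAbove (Set.finite_range f)
  have bddB : ∀ (f : A → ℝ), BddAbove (Set.range f) :=
    fun f => Set.Finite.bddAbove (Set.finite_range f)
  obtain ⟨j0, hj0⟩ := Finite.exists_min (fun j => ‖wi - w j‖)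
  have hinf : (⨅ j, ‖wi - w j‖) = ‖wi - w j0‖ := by
    refine le_antisymm (ciInf_le ⟨0, ?_⟩ j0) (le_ciInf hj0)
    rintro x ⟨j, rfl⟩; exact norm_nonneg _
  set δ := φmax * ‖wi - w j0‖ with hδ
  have hδ0 : 0 ≤ δ := mul_nonneg hφ0 (norm_nonneg _)
  have hrw : ∀ s a, |(inner ℝ (φ s a) wi : ℝ) - inner ℝ (φ s a) (w j0)| ≤ δ := by
    intro s a
    rw [← inner_sub_right]
    calc |(inner ℝ (φ s a) (wi - w j0) : ℝ)| ≤ ‖φ s a‖ * ‖wi - w j0‖ :=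
          abs_real_inner_le_norm _ _
    _ ≤ δ := mul_le_mul_of_nonneg_right (hφmax s a) (norm_nonneg _)
  -- Bound A : Qstarj j0 - Qi j0 ≤ δ / (1-γ)
  have hA : ∀ s a, Qstarj j0 s a - Qi j0 s a ≤ δ / (1 - γ) := by
    refine sup_bound_aux p hp0 hp1 γ δ hγ0 hγ1 _
      (fun s' => Qstarj j0 s' (πj j0 s') - Qi j0 s' (πj j0 s')) ?_ ?_
    · intro s a
      have e : Qstarj j0 s a - Qi j0 s a =
          ((inner ℝ (φ s a) (w j0) : ℝ) - inner ℝ (φ s a) wi) +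
            γ * ∑ s', p s a s' * (Qstarj j0 s' (πj j0 s') - Qi j0 s' (πj j0 s')) := by
        rw [hπjopt j0 s a, hQi j0 s a]
        simp only [mul_sub, Finset.sum_sub_distrib]
        ring
      rw [e]
      refine add_le_add_left ?_ _
      refine (le_abs_self _).trans ?_
      rw [abs_sub_comm]; exact hrw s a
    · intro s'; exact ⟨πj j0 s', le_rfl⟩
  -- Bound B : Qstari - Qstarj j0 ≤ δ / (1-γ)
  have hB : ∀ s a, Qstari s a - Qstarj j0 s a ≤ δ / (1 - γ) := by
    refine sup_bound_aux p hp0 hp1 γ δ hγ0 hγ1 _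
      (fun s' => (⨆ b, Qstari s' b) - ⨆ b, Qstarj j0 s' b) ?_ ?_
    · intro s a
      have e : Qstari s a - Qstarj j0 s a =
          ((inner ℝ (φ s a) wi : ℝ) - inner ℝ (φ s a) (w j0)) +
            γ * ∑ s', p s a s' * ((⨆ b, Qstari s' b) - ⨆ b, Qstarj j0 s' b) := by
        rw [hQstari s a, hQstarj j0 s a]
        simp only [mul_sub, Finset.sum_sub_distrib]
        ring
      rw [e]
      exact add_le_add_left ((le_abs_self _).trans (hrw s a)) _
    · intro s'
      obtain ⟨b, hb⟩ := Finite.exists_max (fun b => Qstari s' b)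
      refine ⟨b, ?_⟩
      have h1 : (⨆ c, Qstari s' c) = Qstari s' b :=
        le_antisymm (ciSup_le hb) (le_ciSup (bddB _) b)
      have h2 : Qstarj j0 s' b ≤ ⨆ c, Qstarj j0 s' c := le_ciSup (bddB _) b
      linarith [h1, h2]
  -- Bound C : GPI : (⨆ k, Qi k) - Qπ ≤ 2γε / (1-γ)
  have hC : ∀ s a, (⨆ k, Qi k s a) - Qπ s a ≤ (2 * γ * ε) / (1 - γ) := by
    refine sup_bound_aux p hp0 hp1 γ (2 * γ * ε) hγ0 hγ1 _
      (fun s' => (⨆ k, Qi k s' (π s')) - Qπ s' (π s')) ?_ ?_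
    · intro s a
      obtain ⟨k, hk⟩ := Finite.exists_max (fun k => Qi k s a)
      have hsup : (⨆ m, Qi m s a) = Qi k s a :=
        le_antisymm (ciSup_le hk) (le_ciSup (bddA fun m => Qi m s a) k)
      have step : ∀ s', Qi k s' (πj k s') - Qπ s' (π s') ≤
          ((⨆ m, Qi m s' (π s')) - Qπ s' (π s')) + 2 * ε := by
        intro s'
        have h1 : Qi k s' (πj k s') ≤ Qt k s' (πj k s') + ε := by
          have := hε k s' (πj k s')
          have := abs_le.mp this
          linarith [this.1]
        have h2 : Qt k s' (πj k s') ≤ ⨆ m, Qt m s' (πj k s') := le_ciSup (bddA fun m => Qt m s' (πj k s')) k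
        have h3 : (⨆ m, Qt m s' (πj k s')) ≤ ⨆ m, Qt m s' (π s') := hπ s' (πj k s')
        have h4 : (⨆ m, Qt m s' (π s')) ≤ (⨆ m, Qi m s' (π s')) + ε := by
          refine ciSup_le fun m => ?_
          have h5 : Qt m s' (π s') ≤ Qi m s' (π s') + ε := by
            have := abs_le.mp (hε m s' (π s'))
            linarith [this.2]
          exact h5.trans (add_le_add_left (le_ciSup (bddA fun m => Qi m s' (π s')) m) ε)
        linarith
      have e : Qi k s a - Qπ s a =
          γ * ∑ s', p s a s' * (Qi k s' (πj k s') - Qπ s' (π s')) := by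
        rw [hQi k s a, hQπ s a]
        simp only [mul_sub, Finset.sum_sub_distrib]
        ring
      rw [hsup, e]
      calc γ * ∑ s', p s a s' * (Qi k s' (πj k s') - Qπ s' (π s'))
          ≤ γ * ∑ s', p s a s' * (((⨆ m, Qi m s' (π s')) - Qπ s' (π s')) + 2 * ε) := by
            refine mul_le_mul_of_nonneg_left ?_ hγ0
            exact Finset.sum_le_sum fun s' _ =>
              mul_le_mul_of_nonneg_left (step s') (hp0 s a s')
        _ = 2 * γ * ε + γ * ∑ s', p s a s' *
              ((⨆ m, Qi m s' (π s')) - Qπ s' (π s')) := by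
            simp only [mul_add, Finset.sum_add_distrib, ← Finset.sum_mul, hp1]
            ring
    · intro s'; exact ⟨π s', le_rfl⟩
  intro s a
  have hj0sup : Qi j0 s a ≤ ⨆ k, Qi k s a := le_ciSup (bddA fun k => Qi k s a) j0
  have key : Qstari s a - Qπ s a ≤ (2 * δ + 2 * γ * ε) / (1 - γ) := by
    have h1 := hA s a
    have h2 := hB s a
    have h3 := hC s a
    have e : (2 * δ + 2 * γ * ε) / (1 - γ) =
        δ / (1 - γ) + δ / (1 - γ) + (2 * γ * ε) / (1 - γ) := by ring
    rw [e]; linarith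
  rw [hinf]
  calc Qstari s a - Qπ s a ≤ (2 * δ + 2 * γ * ε) / (1 - γ) := key
    _ ≤ (2 * δ + 2 * ε) / (1 - γ) := by
        have hnum : 2 * δ + 2 * γ * ε ≤ 2 * δ + 2 * ε := by nlinarith
        gcongr
    _ = 2 / (1 - γ) * (φmax * ‖wi - w j0‖ + ε) := by rw [hδ]; ring
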